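/- Let < be a strict linear order on M₀ such that (M₀, <) is ultrahomogeneous, and suppose the age of (M₀, <) has the Ramsey property. Then there are no elements a < b < c in M₀ with E₁(a, c) and ¬E₁(a, b); equivalently, every E₁-equivalence class of M₀ is a convex subset with respect to <. -/

import Mathlib

open FirstOrder Language Structure CategoryTheory

/-- The language `L₀` with a `2n`-ary relation symbol `E_n` for each `n ≥ 1`. -/
def L₀ : FirstOrder.Language where
  Functions := fun _ => Empty
  Relations := fun k => {n : ℕ // 0 < n ∧ k = n + n}

/-- The relation symbol `E_n`. -/
def Esymb (n : ℕ) (hn : 0 < n) : L₀.Relations (n + n) := ⟨n, hn, rfl⟩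

/-- `E_n(x̄, ȳ)` in an `L₀`-structure. -/
def ERel (M : Type*) [L₀.Structure M] (n : ℕ) (hn : 0 < n) (x y : Fin n → M) : Prop :=
  Structure.RelMap (Esymb n hn) (Fin.append x y)

/-- The defining conditions for membership in `K₀`: each `E_n` holds only on pairs of
injective `n`-tuples, is invariant under permuting the entries of each tuple separately,
and induces an equivalence relation on `n`-element subsets. -/
def IsK0Struct (C : Type*) [L₀.Structure C] : Prop :=
  ∀ (n : ℕ) (hn : 0 < n),
    (∀ x y : Fin n → C, ERel C n hn x y → Function.Injective x ∧ Function.Injective y) ∧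
    (∀ (x y : Fin n → C) (σ τ : Equiv.Perm (Fin n)),
        ERel C n hn x y → ERel C n hn (x ∘ σ) (y ∘ τ)) ∧
    (∀ x : Fin n → C, Function.Injective x → ERel C n hn x x) ∧
    (∀ x y : Fin n → C, ERel C n hn x y → ERel C n hn y x) ∧
    (∀ x y z : Fin n → C, ERel C n hn x y → ERel C n hn y z → ERel C n hn x z)

/-- The class `K₀` of finite `L₀`-structures as above. -/
def K₀ : Set (Bundled L₀.Structure) := {C | Finite C ∧ IsK0Struct C}

/-- A language with a single binary relation symbol (for a linear order). -/
def Lord : FirstOrder.Language where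
  Functions := fun _ => Empty
  Relations := fun k => PLift (k = 2)

/-- Interpret the binary relation symbol of `Lord` by a given relation `r`. -/
def ordStructure (M : Type*) (r : M → M → Prop) : Lord.Structure M where
  funMap := fun f => f.elim
  RelMap := fun {k} R v => r (v (Fin.cast R.down.symm 0)) (v (Fin.cast R.down.symm 1))

/-- The language of `L₀` together with one extra binary relation symbol `<`. -/
abbrev L₀lt : FirstOrder.Language := L₀.sum Lord

/-- The expansion of an `L₀`-structure by the binary relation `r`. -/
def expStr (M : Type*) [L₀.Structure M] (r : M → M → Prop) : L₀lt.Structure M :=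
  @Language.sumStructure L₀ Lord M _ (ordStructure M r)

/-- The Ramsey property for a class `K` of finite structures: for all `A, B ∈ K` and
`k ≥ 1` there is `C ∈ K` such that every `k`-coloring of the copies of `A` in `C` is
monochromatic on the copies of `A` inside some copy `B'` of `B` in `C`. -/
def RamseyProperty {L : FirstOrder.Language} (K : Set (Bundled L.Structure)) : Prop :=
  ∀ A B : Bundled L.Structure, A ∈ K → B ∈ K → ∀ k : ℕ, 0 < k →
    ∃ C : Bundled L.Structure, C ∈ K ∧
      ∀ χ : {S : L.Substructure C // Nonempty (S ≃[L] A)} → Fin k,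
        ∃ B' : L.Substructure C, Nonempty (B' ≃[L] B) ∧
          ∀ S T : {S : L.Substructure C // Nonempty (S ≃[L] A)},
            S.1 ≤ B' → T.1 ≤ B' → χ S = χ T

section Helpers

open FirstOrder Language Structure

theorem comp_append {α β : Type*} {m n : ℕ} (g : α → β) (x : Fin m → α) (y : Fin n → α) :
    g ∘ Fin.append x y = Fin.append (g ∘ x) (g ∘ y) := by
  funext i
  refine Fin.addCases (fun j => ?_) (fun j => ?_) i <;>
    simp [Fin.append_left, Fin.append_right, Function.comp]

theorem eq_append {α : Type*} {n : ℕ} (v : Fin (n + n) → α) :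
    v = Fin.append (fun i => v (Fin.castAdd n i)) (fun i => v (Fin.natAdd n i)) := by
  funext i
  refine Fin.addCases (fun j => ?_) (fun j => ?_) i
  · exact (Fin.append_left (fun i => v (Fin.castAdd n i)) (fun i => v (Fin.natAdd n i)) j).symm
  · exact (Fin.append_right (fun i => v (Fin.castAdd n i)) (fun i => v (Fin.natAdd n i)) j).symm

/-- `ERel` transfers along `L₀`-embeddings. -/
theorem ERel_map {M N : Type*} [L₀.Structure M] [L₀.Structure N] (g : M ↪[L₀] N)
    {n : ℕ} (hn : 0 < n) (x y : Fin n → M) :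
    ERel N n hn (g ∘ x) (g ∘ y) ↔ ERel M n hn x y := by
  unfold ERel
  rw [← comp_append]
  exact g.map_rel _ _

/-- In a purely relational language such as `L₀lt`, the closure of any set is itself. -/
theorem closure_eq_self {M : Type*} [L₀lt.Structure M] (s : Set M) :
    ((Substructure.closure L₀lt s : L₀lt.Substructure M) : Set M) = s := by
  have h : ∃ S : L₀lt.Substructure M, (S : Set M) = s := by
    refine ⟨⟨s, ?_⟩, rfl⟩
    intro n f
    cases f with
    | inl f => exact f.elim
    | inr f => exact f.elim
  obtain ⟨S, hS⟩ := h
  apply le_antisymm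
  · have : Substructure.closure L₀lt s ≤ S :=
      (Substructure.closure_le (S := S)).2 (by rw [hS])
    intro x hx
    rw [← hS]
    exact this hx
  · exact Substructure.subset_closure

theorem closure0_eq_self {M : Type*} [L₀.Structure M] (s : Set M) :
    ((Substructure.closure L₀ s : L₀.Substructure M) : Set M) = s := by
  have h : ∃ S : L₀.Substructure M, (S : Set M) = s := by
    refine ⟨⟨s, ?_⟩, rfl⟩
    intro n f
    exact f.elim
  obtain ⟨S, hS⟩ := h
  apply le_antisymm
  · have : Substructure.closure L₀ s ≤ S :=
      (Substructure.closure_le (S := S)).2 (by rw [hS])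
    intro x hx
    rw [← hS]
    exact this hx
  · exact Substructure.subset_closure

/-- A finitely generated `L₀lt`-structure is finite. -/
theorem finite_of_fg {M : Type*} [L₀lt.Structure M] (h : Structure.FG L₀lt M) : Finite M := by
  obtain ⟨s, hs⟩ := h
  have : ((⊤ : L₀lt.Substructure M) : Set M) = (s : Set M) := by
    rw [← hs]; exact closure_eq_self _
  have huniv : (Set.univ : Set M) = (s : Set M) := by
    rw [← this]; rfl
  rw [← Set.finite_univ_iff, huniv]
  exact s.finite_toSet
theorem isK0_of_age {M : Type} [L₀.Structure M] (hage : L₀.age M = K₀) : IsK0Struct M := by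
  have getK : ∀ s : Set M, s.Finite → IsK0Struct (Substructure.closure L₀ s) := by
    intro s hs
    have hmem := age.fg_substructure (M := M) (Substructure.fg_closure (L := L₀) hs)
    rw [hage] at hmem
    exact hmem.2
  intro n hn
  refine ⟨?_, ?_, ?_, ?_, ?_⟩
  · intro x y hxy
    set s : Set M := Set.range x ∪ Set.range y with hs
    have hx : ∀ i, x i ∈ Substructure.closure L₀ s :=
      fun i => Substructure.subset_closure (Or.inl ⟨i, rfl⟩)
    have hy : ∀ i, y i ∈ Substructure.closure L₀ s :=
      fun i => Substructure.subset_closure (Or.inr ⟨i, rfl⟩)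
    set x' : Fin n → Substructure.closure L₀ s := fun i => ⟨x i, hx i⟩ with hx'
    set y' : Fin n → Substructure.closure L₀ s := fun i => ⟨y i, hy i⟩ with hy'
    have hcx : (Substructure.closure L₀ s).subtype ∘ x' = x := rfl
    have hcy : (Substructure.closure L₀ s).subtype ∘ y' = y := rfl
    have h' : ERel (Substructure.closure L₀ s) n hn x' y' := by
      rw [← ERel_map (Substructure.closure L₀ s).subtype hn, hcx, hcy]
      exact hxy
    obtain ⟨h1, h2⟩ := ((getK s (hs ▸ ((Set.finite_range x).union (Set.finite_range y)))) n hn).1 x' y' h'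
    constructor
    · rw [← hcx]; exact (Substructure.closure L₀ s).subtype.injective.comp h1
    · rw [← hcy]; exact (Substructure.closure L₀ s).subtype.injective.comp h2
  · intro x y σ τ hxy
    set s : Set M := Set.range x ∪ Set.range y with hs
    have hx : ∀ i, x i ∈ Substructure.closure L₀ s :=
      fun i => Substructure.subset_closure (Or.inl ⟨i, rfl⟩)
    have hy : ∀ i, y i ∈ Substructure.closure L₀ s :=
      fun i => Substructure.subset_closure (Or.inr ⟨i, rfl⟩)
    set x' : Fin n → Substructure.closure L₀ s := fun i => ⟨x i, hx i⟩ with hx'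
    set y' : Fin n → Substructure.closure L₀ s := fun i => ⟨y i, hy i⟩ with hy'
    have hcx : (Substructure.closure L₀ s).subtype ∘ x' = x := rfl
    have hcy : (Substructure.closure L₀ s).subtype ∘ y' = y := rfl
    have h' : ERel (Substructure.closure L₀ s) n hn x' y' := by
      rw [← ERel_map (Substructure.closure L₀ s).subtype hn, hcx, hcy]
      exact hxy
    have h2 := ((getK s (hs ▸ ((Set.finite_range x).union (Set.finite_range y)))) n hn).2.1
      x' y' σ τ h'
    rw [← ERel_map (Substructure.closure L₀ s).subtype hn] at h2
    exact h2
  · intro x hxinj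
    set s : Set M := Set.range x with hs
    have hx : ∀ i, x i ∈ Substructure.closure L₀ s :=
      fun i => Substructure.subset_closure ⟨i, rfl⟩
    set x' : Fin n → Substructure.closure L₀ s := fun i => ⟨x i, hx i⟩ with hx'
    have hcx : (Substructure.closure L₀ s).subtype ∘ x' = x := rfl
    have hinj' : Function.Injective x' := by
      intro i j hij
      apply hxinj
      rw [← hcx]
      simp only [Function.comp_apply, hij]
    have h2 := ((getK s (hs ▸ Set.finite_range x)) n hn).2.2.1 x' hinj'
    rw [← ERel_map (Substructure.closure L₀ s).subtype hn] at h2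
    exact h2
  · intro x y hxy
    set s : Set M := Set.range x ∪ Set.range y with hs
    have hx : ∀ i, x i ∈ Substructure.closure L₀ s :=
      fun i => Substructure.subset_closure (Or.inl ⟨i, rfl⟩)
    have hy : ∀ i, y i ∈ Substructure.closure L₀ s :=
      fun i => Substructure.subset_closure (Or.inr ⟨i, rfl⟩)
    set x' : Fin n → Substructure.closure L₀ s := fun i => ⟨x i, hx i⟩ with hx'
    set y' : Fin n → Substructure.closure L₀ s := fun i => ⟨y i, hy i⟩ with hy'
    have hcx : (Substructure.closure L₀ s).subtype ∘ x' = x := rfl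
    have hcy : (Substructure.closure L₀ s).subtype ∘ y' = y := rfl
    have h' : ERel (Substructure.closure L₀ s) n hn x' y' := by
      rw [← ERel_map (Substructure.closure L₀ s).subtype hn, hcx, hcy]
      exact hxy
    have h2 := ((getK s (hs ▸ ((Set.finite_range x).union (Set.finite_range y)))) n hn).2.2.2.1
      x' y' h'
    rw [← ERel_map (Substructure.closure L₀ s).subtype hn] at h2
    exact h2
  · intro x y z hxy hyz
    set s : Set M := Set.range x ∪ Set.range y ∪ Set.range z with hs
    have hx : ∀ i, x i ∈ Substructure.closure L₀ s :=
      fun i => Substructure.subset_closure (Or.inl (Or.inl ⟨i, rfl⟩))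
    have hy : ∀ i, y i ∈ Substructure.closure L₀ s :=
      fun i => Substructure.subset_closure (Or.inl (Or.inr ⟨i, rfl⟩))
    have hz : ∀ i, z i ∈ Substructure.closure L₀ s :=
      fun i => Substructure.subset_closure (Or.inr ⟨i, rfl⟩)
    set x' : Fin n → Substructure.closure L₀ s := fun i => ⟨x i, hx i⟩ with hx'
    set y' : Fin n → Substructure.closure L₀ s := fun i => ⟨y i, hy i⟩ with hy'
    set z' : Fin n → Substructure.closure L₀ s := fun i => ⟨z i, hz i⟩ with hz'
    have hcx : (Substructure.closure L₀ s).subtype ∘ x' = x := rfl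
    have hcy : (Substructure.closure L₀ s).subtype ∘ y' = y := rfl
    have hcz : (Substructure.closure L₀ s).subtype ∘ z' = z := rfl
    have hfin : s.Finite :=
      hs ▸ (((Set.finite_range x).union (Set.finite_range y)).union (Set.finite_range z))
    have h1' : ERel (Substructure.closure L₀ s) n hn x' y' := by
      rw [← ERel_map (Substructure.closure L₀ s).subtype hn, hcx, hcy]; exact hxy
    have h2' : ERel (Substructure.closure L₀ s) n hn y' z' := by
      rw [← ERel_map (Substructure.closure L₀ s).subtype hn, hcy, hcz]; exact hyz
    have h3 := ((getK s hfin) n hn).2.2.2.2 x' y' z' h1' h2'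
    rw [← ERel_map (Substructure.closure L₀ s).subtype hn] at h3
    exact h3
theorem fin2_cases {P : Fin 2 → Prop} (h0 : P 0) (h1 : P 1) : ∀ i, P i := by
  intro i
  obtain ⟨iv, hi⟩ := i
  interval_cases iv
  · exact h0
  · exact h1

theorem pairChar {M : Type} [L₀.Structure M] (hK : IsK0Struct M) (p q : M) (hpq : p ≠ q)
    (hE : ¬ ERel M 1 one_pos (fun _ => p) (fun _ => q)) {n : ℕ} (hn : 0 < n)
    (l t : Fin n → M) (hl : ∀ i, l i = p ∨ l i = q) (ht : ∀ i, t i = p ∨ t i = q) :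
    ERel M n hn l t ↔
      ((n = 1 ∧ l = t) ∨ (n = 2 ∧ Function.Injective l ∧ Function.Injective t)) := by
  have hE1symm : ∀ u w : M, ERel M 1 one_pos (fun _ => u) (fun _ => w) →
      ERel M 1 one_pos (fun _ => w) (fun _ => u) := fun u w h =>
    (hK 1 one_pos).2.2.2.1 _ _ h
  constructor
  · intro h
    obtain ⟨hlinj, htinj⟩ := (hK n hn).1 l t h
    rcases Nat.lt_or_ge n 3 with h3 | h3
    · interval_cases n
      · -- n = 1
        left
        refine ⟨rfl, ?_⟩
        have hconst : ∀ (f : Fin 1 → M), f = fun _ => f 0 :=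
          fun f => funext fun i => by rw [Subsingleton.elim i 0]
        by_cases heq : l 0 = t 0
        · funext i
          rw [Subsingleton.elim i 0, heq]
        · exfalso
          have h' : ERel M 1 hn (fun _ => l 0) (fun _ => t 0) := by
            rw [← hconst l, ← hconst t]; exact h
          rcases hl 0 with h0 | h0 <;> rcases ht 0 with h1 | h1
          · exact heq (h0.trans h1.symm)
          · rw [h0, h1] at h'; exact hE h'
          · rw [h0, h1] at h'; exact hE (hE1symm _ _ h')
          · exact heq (h0.trans h1.symm)
      · -- n = 2
        exact Or.inr ⟨rfl, hlinj, htinj⟩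
    · exfalso
      have ne01 : (⟨0, by omega⟩ : Fin n) ≠ ⟨1, by omega⟩ := by
        intro hcon; simpa using congrArg Fin.val hcon
      have ne02 : (⟨0, by omega⟩ : Fin n) ≠ ⟨2, by omega⟩ := by
        intro hcon; simpa using congrArg Fin.val hcon
      have ne12 : (⟨1, by omega⟩ : Fin n) ≠ ⟨2, by omega⟩ := by
        intro hcon; simpa using congrArg Fin.val hcon
      rcases hl ⟨0, by omega⟩ with h0 | h0 <;> rcases hl ⟨1, by omega⟩ with h1 | h1 <;>
        rcases hl ⟨2, by omega⟩ with h2 | h2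
      all_goals first
        | exact ne01 (hlinj (h0.trans h1.symm))
        | exact ne02 (hlinj (h0.trans h2.symm))
        | exact ne12 (hlinj (h1.trans h2.symm))
  · intro h
    rcases h with ⟨h1, heq⟩ | ⟨h2, hlinj, htinj⟩
    · subst h1
      subst heq
      exact (hK 1 hn).2.2.1 l (fun i j _ => Subsingleton.elim i j)
    · subst h2
      set c : Fin 2 → M := fun i => if i = 0 then p else q with hc
      have hc0 : c 0 = p := if_pos rfl
      have hc1 : c 1 = q := if_neg (by decide)
      have hcinj : Function.Injective c := by
        have H : ∀ i' j' : Fin 2, c i' = c j' → i' = j' := by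
          refine fin2_cases ?_ ?_ <;> refine fin2_cases ?_ ?_ <;> intro hij
          · rfl
          · rw [hc0, hc1] at hij; exact absurd hij hpq
          · rw [hc0, hc1] at hij; exact absurd hij.symm hpq
          · rfl
        exact fun {i j} => H i j
      have claim : ∀ f : Fin 2 → M, (∀ i, f i = p ∨ f i = q) → Function.Injective f →
          f = c ∨ f = c ∘ ⇑(Equiv.swap (0 : Fin 2) 1) := by
        intro f hf hfinj
        rcases hf 0 with h0 | h0
        · left
          funext i
          refine fin2_cases (P := fun i => f i = c i) ?_ ?_ i
          · show f 0 = c 0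
            rw [h0, hc0]
          · show f 1 = c 1
            rcases hf 1 with h1 | h1
            · exact absurd (hfinj (h1.trans h0.symm)) (by decide)
            · rw [h1, hc1]
        · right
          funext i
          refine fin2_cases (P := fun i => f i = (c ∘ ⇑(Equiv.swap (0 : Fin 2) 1)) i) ?_ ?_ i
          · show f 0 = c (Equiv.swap (0 : Fin 2) 1 0)
            rw [Equiv.swap_apply_left, h0, hc1]
          · rcases hf 1 with h1 | h1
            · show f 1 = c (Equiv.swap (0 : Fin 2) 1 1)
              rw [Equiv.swap_apply_right, h1, hc0]
            · exact absurd (hfinj (h1.trans h0.symm)) (by decide)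
      have base : ERel M 2 hn c c := (hK 2 hn).2.2.1 c hcinj
      have perm : ∀ σ τ : Equiv.Perm (Fin 2), ERel M 2 hn (c ∘ ⇑σ) (c ∘ ⇑τ) :=
        fun σ τ => (hK 2 hn).2.1 c c σ τ base
      rcases claim l hl hlinj with hl' | hl' <;> rcases claim t ht htinj with ht' | ht' <;>
        rw [hl', ht']
      · simpa using perm 1 1
      · simpa using perm 1 (Equiv.swap 0 1)
      · simpa using perm (Equiv.swap 0 1) 1
      · simpa using perm (Equiv.swap 0 1) (Equiv.swap 0 1)
open Classical in
/-- The map sending `x₁ ↦ y₁` and everything else to `y₂`. -/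
noncomputable def phiMap {M : Type} (x₁ y₁ y₂ : M) (z : M) : M :=
  if z = x₁ then y₁ else y₂

theorem phiMap_left {M : Type} (x₁ y₁ y₂ : M) : phiMap x₁ y₁ y₂ x₁ = y₁ := by
  simp [phiMap]

theorem phiMap_right {M : Type} (x₁ y₁ y₂ : M) {z : M} (h : z ≠ x₁) :
    phiMap x₁ y₁ y₂ z = y₂ := by
  simp [phiMap, h]

theorem keyMap {M : Type} [L₀.Structure M] (hK : IsK0Struct M) (r : M → M → Prop)
    (hr : IsStrictTotalOrder M r) (x₁ x₂ y₁ y₂ : M) (hx : r x₁ x₂) (hy : r y₁ y₂)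
    (hnx : ¬ ERel M 1 one_pos (fun _ => x₁) (fun _ => x₂))
    (hny : ¬ ERel M 1 one_pos (fun _ => y₁) (fun _ => y₂)) :
    ∀ {k : ℕ} (R : L₀lt.Relations k) (v : Fin k → M), (∀ i, v i = x₁ ∨ v i = x₂) →
      (@RelMap L₀lt M (expStr M r) k R (phiMap x₁ y₁ y₂ ∘ v) ↔
        @RelMap L₀lt M (expStr M r) k R v) := by
  have hirr : ∀ a : M, ¬ r a a := fun a => hr.toIsStrictOrder.toIrrefl.irrefl a
  have hasym : ∀ a b : M, r a b → ¬ r b a := fun a b hab hba =>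
    hirr a (hr.toIsStrictOrder.toIsTrans.trans a b a hab hba)
  have hx12 : x₁ ≠ x₂ := by intro h; rw [h] at hx; exact hirr _ hx
  have hy12 : y₁ ≠ y₂ := by intro h; rw [h] at hy; exact hirr _ hy
  set φ : M → M := phiMap x₁ y₁ y₂ with hφ
  have hφ1 : φ x₁ = y₁ := phiMap_left x₁ y₁ y₂
  have hφ2 : φ x₂ = y₂ := phiMap_right x₁ y₁ y₂ (fun h => hx12 h.symm)
  have hφinj : ∀ u w : M, (u = x₁ ∨ u = x₂) → (w = x₁ ∨ w = x₂) → φ u = φ w → u = w := by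
    intro u w hu hw h
    rcases hu with hu | hu <;> rcases hw with hw | hw <;> rw [hu, hw] at h ⊢
    · rw [hφ1, hφ2] at h; exact absurd h hy12
    · rw [hφ2, hφ1] at h; exact absurd h.symm hy12
  intro k R v hv
  cases R with
  | inr R =>
    obtain ⟨hdown⟩ := R
    subst hdown
    show r (φ (v _)) (φ (v _)) ↔ r (v _) (v _)
    rcases hv (Fin.cast rfl 0) with h0 | h0 <;> rcases hv (Fin.cast rfl 1) with h1 | h1 <;>
      rw [h0, h1]
    · rw [hφ1]; exact iff_of_false (hirr _) (hirr _)
    · rw [hφ1, hφ2]; exact iff_of_true hy hx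
    · rw [hφ1, hφ2]; exact iff_of_false (hasym _ _ hy) (hasym _ _ hx)
    · rw [hφ2]; exact iff_of_false (hirr _) (hirr _)
  | inl R =>
    obtain ⟨n, hn, hk⟩ := R
    subst hk
    set l : Fin n → M := fun i => v (Fin.castAdd n i) with hldef
    set t : Fin n → M := fun i => v (Fin.natAdd n i) with htdef
    have hl : ∀ i, l i = x₁ ∨ l i = x₂ := fun i => hv _
    have ht : ∀ i, t i = x₁ ∨ t i = x₂ := fun i => hv _
    have hl' : ∀ i, (φ ∘ l) i = y₁ ∨ (φ ∘ l) i = y₂ := by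
      intro i
      rcases hl i with h | h
      · left; show φ (l i) = y₁; rw [h, hφ1]
      · right; show φ (l i) = y₂; rw [h, hφ2]
    have ht' : ∀ i, (φ ∘ t) i = y₁ ∨ (φ ∘ t) i = y₂ := by
      intro i
      rcases ht i with h | h
      · left; show φ (t i) = y₁; rw [h, hφ1]
      · right; show φ (t i) = y₂; rw [h, hφ2]
    have hgoal : (ERel M n hn (φ ∘ l) (φ ∘ t) ↔ ERel M n hn l t) := by
      rw [pairChar hK y₁ y₂ hy12 hny hn _ _ hl' ht', pairChar hK x₁ x₂ hx12 hnx hn _ _ hl ht]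
      constructor
      · rintro (⟨h1, heq⟩ | ⟨h2, hinj1, hinj2⟩)
        · refine Or.inl ⟨h1, funext fun i => ?_⟩
          exact hφinj _ _ (hl i) (ht i) (congrFun heq i)
        · refine Or.inr ⟨h2, ?_, ?_⟩
          · intro i j hij
            exact hinj1 (show (φ ∘ l) i = (φ ∘ l) j from congrArg φ hij)
          · intro i j hij
            exact hinj2 (show (φ ∘ t) i = (φ ∘ t) j from congrArg φ hij)
      · rintro (⟨h1, heq⟩ | ⟨h2, hinj1, hinj2⟩)
        · exact Or.inl ⟨h1, by rw [heq]⟩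
        · refine Or.inr ⟨h2, ?_, ?_⟩
          · intro i j hij
            exact hinj1 (hφinj _ _ (hl i) (hl j) hij)
          · intro i j hij
            exact hinj2 (hφinj _ _ (ht i) (ht j) hij)
    have hv' : v = Fin.append l t := eq_append v
    have hφv : φ ∘ v = Fin.append (φ ∘ l) (φ ∘ t) := by
      rw [hv', comp_append]
    show RelMap (Esymb n hn) (φ ∘ v) ↔ RelMap (Esymb n hn) v
    rw [hφv, hv']
    exact hgoal
/-- `E₁` in an `L₀lt`-structure. -/
def E1lt {N : Type*} [L₀lt.Structure N] (u v : N) : Prop :=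
  @RelMap L₀lt N _ (1 + 1) (Sum.inl (Esymb 1 one_pos))
    (Fin.append (fun _ => u) (fun _ => v))

/-- the order relation in an `L₀lt`-structure. -/
def rlt {N : Type*} [L₀lt.Structure N] (u v : N) : Prop :=
  @RelMap L₀lt N _ (1 + 1) (Sum.inr ⟨rfl⟩)
    (Fin.append (fun _ => u) (fun _ => v))

theorem E1lt_map {N N' : Type*} [L₀lt.Structure N] [L₀lt.Structure N'] (f : N ↪[L₀lt] N')
    (u v : N) : E1lt (f u) (f v) ↔ E1lt u v := by
  unfold E1lt
  rw [show (Fin.append (fun _ => f u) (fun _ => f v)) =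
    f ∘ (Fin.append (fun _ => u) (fun _ => v)) from by rw [comp_append]; rfl]
  exact f.map_rel _ _

theorem rlt_map {N N' : Type*} [L₀lt.Structure N] [L₀lt.Structure N'] (f : N ↪[L₀lt] N')
    (u v : N) : rlt (f u) (f v) ↔ rlt u v := by
  unfold rlt
  rw [show (Fin.append (fun _ => f u) (fun _ => f v)) =
    f ∘ (Fin.append (fun _ => u) (fun _ => v)) from by rw [comp_append]; rfl]
  exact f.map_rel _ _

theorem E1lt_expStr {M : Type} [L₀.Structure M] (r : M → M → Prop) (u v : M) :
    (@E1lt M (expStr M r) u v) ↔ ERel M 1 one_pos (fun _ => u) (fun _ => v) :=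
  Iff.rfl

theorem rlt_expStr {M : Type} [L₀.Structure M] (r : M → M → Prop) (u v : M) :
    (@rlt M (expStr M r) u v) ↔ r u v :=
  Iff.rfl
/-- if `<` is a strict linear order on `M₀` making `(M₀, <)` ultrahomogeneous
and its age has the Ramsey property, then there are no `a < b < c` with `E₁(a, c)` and
`¬E₁(a, b)`; equivalently, every `E₁`-class is convex with respect to `<`. -/
theorem M0_E1_classes_convex (M₀ : Type) [L₀.Structure M₀] [Countable M₀]
    (hUH : L₀.IsUltrahomogeneous M₀) (hage : L₀.age M₀ = K₀)
    (r : M₀ → M₀ → Prop) (hr : IsStrictTotalOrder M₀ r)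
    (hUH' : @Language.IsUltrahomogeneous L₀lt M₀ (expStr M₀ r))
    (hRamsey : RamseyProperty (@Language.age L₀lt M₀ (expStr M₀ r))) :
    (¬ ∃ a b c : M₀, r a b ∧ r b c ∧ ERel M₀ 1 one_pos (fun _ => a) (fun _ => c) ∧
        ¬ ERel M₀ 1 one_pos (fun _ => a) (fun _ => b)) ∧
    (∀ a b c : M₀, r a b → r b c → ERel M₀ 1 one_pos (fun _ => a) (fun _ => c) →
        ERel M₀ 1 one_pos (fun _ => a) (fun _ => b) ∧
        ERel M₀ 1 one_pos (fun _ => b) (fun _ => c)) := by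
  classical
  letI instM : L₀lt.Structure M₀ := expStr M₀ r
  have hK : IsK0Struct M₀ := isK0_of_age hage
  have E1refl : ∀ u : M₀, ERel M₀ 1 one_pos (fun _ => u) (fun _ => u) :=
    fun u => (hK 1 one_pos).2.2.1 _ (fun i j _ => Subsingleton.elim i j)
  have E1symm : ∀ u v : M₀, ERel M₀ 1 one_pos (fun _ => u) (fun _ => v) →
      ERel M₀ 1 one_pos (fun _ => v) (fun _ => u) := fun u v h => (hK 1 one_pos).2.2.2.1 _ _ h
  have E1trans : ∀ u v w : M₀, ERel M₀ 1 one_pos (fun _ => u) (fun _ => v) →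
      ERel M₀ 1 one_pos (fun _ => v) (fun _ => w) →
      ERel M₀ 1 one_pos (fun _ => u) (fun _ => w) :=
    fun u v w h h' => (hK 1 one_pos).2.2.2.2 _ _ _ h h'
  have hirr : ∀ u : M₀, ¬ r u u := fun u => hr.toIsStrictOrder.toIrrefl.irrefl u
  have htrans : ∀ u v w : M₀, r u v → r v w → r u w :=
    fun u v w h h' => hr.toIsStrictOrder.toIsTrans.trans _ _ _ h h'
  have hasym : ∀ u v : M₀, r u v → ¬ r v u := fun u v h h' => hirr u (htrans _ _ _ h h')
  have main : ¬ ∃ a b c : M₀, r a b ∧ r b c ∧ ERel M₀ 1 one_pos (fun _ => a) (fun _ => c) ∧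
      ¬ ERel M₀ 1 one_pos (fun _ => a) (fun _ => b) := by
    rintro ⟨a, b, c, hab, hbc, hac, hnab⟩
    have hnbc : ¬ ERel M₀ 1 one_pos (fun _ => b) (fun _ => c) :=
      fun h => hnab (E1trans a c b hac (E1symm b c h))
    have hne_ab : a ≠ b := fun h => by subst h; exact hirr a hab
    have hne_bc : b ≠ c := fun h => by subst h; exact hirr b hbc
    -- the two finite substructures
    set Sab : L₀lt.Substructure M₀ := Substructure.closure L₀lt ({a, b} : Set M₀) with hSabdef
    set Sabc : L₀lt.Substructure M₀ :=
      Substructure.closure L₀lt ({a, b, c} : Set M₀) with hSabcdef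
    have hSabSet : (Sab : Set M₀) = {a, b} := closure_eq_self _
    have hSabcSet : (Sabc : Set M₀) = {a, b, c} := closure_eq_self _
    have maS : a ∈ Sab := Substructure.subset_closure (by simp)
    have mbS : b ∈ Sab := Substructure.subset_closure (by simp)
    have maT : a ∈ Sabc := Substructure.subset_closure (by simp)
    have mbT : b ∈ Sabc := Substructure.subset_closure (by simp)
    have mcT : c ∈ Sabc := Substructure.subset_closure (by simp)
    have hle : Sab ≤ Sabc := by
      rw [hSabdef]
      refine (Substructure.closure_le).2 ?_
      intro x hx
      rcases hx with h | h
      · exact h ▸ maT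
      · rw [Set.mem_singleton_iff] at h
        exact h ▸ mbT
    have hA : Bundled.mk ↥Sab ∈ L₀lt.age M₀ :=
      age.fg_substructure (Substructure.fg_closure
        ((Set.finite_singleton b).insert a))
    have hB : Bundled.mk ↥Sabc ∈ L₀lt.age M₀ :=
      age.fg_substructure (Substructure.fg_closure
        (((Set.finite_singleton c).insert b).insert a))
    obtain ⟨C, hCage, hRam⟩ := hRamsey (Bundled.mk ↥Sab) (Bundled.mk ↥Sabc) hA hB 2 (by norm_num)
    obtain ⟨hCfg, ⟨e⟩⟩ := hCage
    haveI hCfin : Finite C := finite_of_fg hCfg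
    -- rlt is asymmetric in C
    have hasymC : ∀ u v : C, rlt u v → ¬ rlt v u := by
      intro u v h h'
      rw [← rlt_map e] at h h'
      rw [rlt_expStr] at h h'
      exact hasym _ _ h h'
    -- a coloring function separating the E₁-classes of C
    letI sC : Setoid C := ⟨fun u v => ERel M₀ 1 one_pos (fun _ => e u) (fun _ => e v),
      ⟨fun u => E1refl _, fun h => E1symm _ _ h, fun h h' => E1trans _ _ _ h h'⟩⟩
    haveI : Fintype (Quotient sC) := Fintype.ofFinite _
    set hfun : C → ℕ :=
      fun u => ((Fintype.equivFin (Quotient sC)) (Quotient.mk sC u) : Fin _).val with hhfun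
    have hfun_iff : ∀ u v : C,
        hfun u = hfun v ↔ ERel M₀ 1 one_pos (fun _ => e u) (fun _ => e v) := by
      intro u v
      constructor
      · intro h
        exact Quotient.exact ((Fintype.equivFin (Quotient sC)).injective (Fin.val_injective h))
      · intro h
        have hq : Quotient.mk sC u = Quotient.mk sC v := Quotient.sound h
        rw [hhfun]
        simp only [hq]
    -- apply the Ramsey property to the canonical coloring
    obtain ⟨B', ⟨j⟩, hmono⟩ := hRam (fun S =>
      if hfun ↑((Classical.choice S.2).symm ⟨a, maS⟩) <
          hfun ↑((Classical.choice S.2).symm ⟨b, mbS⟩) then 0 else 1)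
    -- the canonical embedding of Sabc into C with range in B'
    set g0 : ↥Sabc ↪[L₀lt] C := (B'.subtype).comp j.symm.toEmbedding with hg0def
    have hg0ran : ∀ z : ↥Sabc, g0 z ∈ B' := fun z => (j.symm z).2
    -- the embedding of Sab into Sabc sending a to b and b to c
    have e2mem : ∀ z : ↥Sab, phiMap a b c ↑z ∈ Sabc := by
      intro z
      by_cases h : (z : M₀) = a
      · rw [h, phiMap_left]; exact mbT
      · rw [phiMap_right _ _ _ h]; exact mcT
    have hmemab : ∀ z : ↥Sab, (z : M₀) = a ∨ (z : M₀) = b := by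
      intro z
      have h' : (z : M₀) ∈ (Sab : Set M₀) := z.2
      rw [hSabSet] at h'
      simpa using h'
    have hphiinj : ∀ u v : M₀, (u = a ∨ u = b) → (v = a ∨ v = b) →
        phiMap a b c u = phiMap a b c v → u = v := by
      intro u v hu hv h
      rcases hu with hu | hu <;> rcases hv with hv | hv <;> rw [hu, hv] at h ⊢
      · rw [phiMap_left, phiMap_right _ _ _ hne_ab.symm] at h
        exact absurd h hne_bc
      · rw [phiMap_left, phiMap_right _ _ _ hne_ab.symm] at h
        exact absurd h.symm hne_bc
    set e2 : ↥Sab ↪[L₀lt] ↥Sabc :=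
      ⟨⟨fun z => ⟨phiMap a b c ↑z, e2mem z⟩, by
        intro z w h
        have h' : phiMap a b c ↑z = phiMap a b c ↑w := congrArg Subtype.val h
        exact Subtype.ext (hphiinj _ _ (hmemab z) (hmemab w) h')⟩, by
        intro n f x
        rcases f with f | f <;> exact f.elim, by
        intro k R x
        show @RelMap L₀lt M₀ instM k R (fun i => phiMap a b c ↑(x i)) ↔
          @RelMap L₀lt M₀ instM k R (fun i => ↑(x i))
        exact keyMap hK r hr a b b c hab hbc hnab hnbc R (fun i => ↑(x i))
          (fun i => hmemab (x i))⟩ with he2def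
    have he2a : e2 ⟨a, maS⟩ = ⟨b, mbT⟩ := Subtype.ext (phiMap_left a b c)
    have he2b : e2 ⟨b, mbS⟩ = ⟨c, mcT⟩ := Subtype.ext (phiMap_right a b c hne_ab.symm)
    set g1 : ↥Sab ↪[L₀lt] C := g0.comp (Substructure.inclusion hle) with hg1def
    set g2 : ↥Sab ↪[L₀lt] C := g0.comp e2 with hg2def
    -- computing the coloring on the range of an embedding of Sab
    have computeχ : ∀ (g : ↥Sab ↪[L₀lt] C)
        (ne : Nonempty ((g.toHom.range : L₀lt.Substructure C) ≃[L₀lt] ↥Sab)),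
        (if hfun ↑((Classical.choice ne).symm ⟨a, maS⟩) <
            hfun ↑((Classical.choice ne).symm ⟨b, mbS⟩) then (0 : Fin 2) else 1) =
          if hfun (g ⟨a, maS⟩) < hfun (g ⟨b, mbS⟩) then 0 else 1 := by
      intro g ne
      set i := Classical.choice ne with hidef
      have hmemrange : ∀ z : ↥Sab, g z ∈ g.toHom.range :=
        fun z => Hom.mem_range.2 ⟨z, rfl⟩
      set u : ↥(g.toHom.range) := ⟨g ⟨a, maS⟩, hmemrange _⟩ with hudef
      set v : ↥(g.toHom.range) := ⟨g ⟨b, mbS⟩, hmemrange _⟩ with hvdef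
      have helts : ∀ z : ↥(g.toHom.range), z = u ∨ z = v := by
        intro z
        obtain ⟨w, hw⟩ := Hom.mem_range.1 z.2
        rcases hmemab w with h | h
        · left
          apply Subtype.ext
          rw [← hw]
          show (g w : C) = g ⟨a, maS⟩
          congr 1
          exact Subtype.ext h
        · right
          apply Subtype.ext
          rw [← hw]
          show (g w : C) = g ⟨b, mbS⟩
          congr 1
          exact Subtype.ext h
      have hrltuv : rlt (u : C) (v : C) := by
        show rlt (g ⟨a, maS⟩) (g ⟨b, mbS⟩)
        rw [rlt_map g]
        have h0 : @rlt M₀ instM a b := (rlt_expStr r a b).2 hab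
        exact (rlt_map Sab.subtype ⟨a, maS⟩ ⟨b, mbS⟩).1 h0
      have hrab : rlt (⟨a, maS⟩ : ↥Sab) (⟨b, mbS⟩ : ↥Sab) := by
        have h0 : @rlt M₀ instM a b := (rlt_expStr r a b).2 hab
        exact (rlt_map Sab.subtype ⟨a, maS⟩ ⟨b, mbS⟩).1 h0
      have habneS : (⟨a, maS⟩ : ↥Sab) ≠ ⟨b, mbS⟩ := fun h => hne_ab (congrArg Subtype.val h)
      have hzw : rlt ((i.symm ⟨a, maS⟩ : ↥(g.toHom.range)) : C) ((i.symm ⟨b, mbS⟩ : _) : C) := by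
        have h1 : rlt (i.symm ⟨a, maS⟩) (i.symm ⟨b, mbS⟩) :=
          (rlt_map i.symm.toEmbedding ⟨a, maS⟩ ⟨b, mbS⟩).2 hrab
        exact (rlt_map (g.toHom.range).subtype _ _).2 h1
      have hzwne : (i.symm ⟨a, maS⟩ : ↥(g.toHom.range)) ≠ i.symm ⟨b, mbS⟩ :=
        fun h => habneS (i.symm.injective h)
      have key1 : i.symm ⟨a, maS⟩ = u := by
        rcases helts (i.symm ⟨a, maS⟩) with h1 | h1
        · exact h1
        · rcases helts (i.symm ⟨b, mbS⟩) with h2 | h2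
          · exfalso
            rw [h1, h2] at hzw
            exact hasymC _ _ hrltuv hzw
          · exact absurd (h1.trans h2.symm) hzwne
      have key2 : i.symm ⟨b, mbS⟩ = v := by
        rcases helts (i.symm ⟨b, mbS⟩) with h2 | h2
        · exact absurd (key1.trans h2.symm) hzwne
        · exact h2
      rw [key1, key2]
    -- ranges of g1 and g2 lie in B'
    have hrange1 : g1.toHom.range ≤ B' := by
      intro x hx
      obtain ⟨w, hw⟩ := Hom.mem_range.1 hx
      rw [← hw]
      exact hg0ran _
    have hrange2 : g2.toHom.range ≤ B' := by
      intro x hx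
      obtain ⟨w, hw⟩ := Hom.mem_range.1 hx
      rw [← hw]
      exact hg0ran _
    have heq := (computeχ g1 ⟨g1.equivRange.symm⟩).symm.trans
      ((hmono ⟨g1.toHom.range, ⟨g1.equivRange.symm⟩⟩ ⟨g2.toHom.range, ⟨g2.equivRange.symm⟩⟩
        hrange1 hrange2).trans (computeχ g2 ⟨g2.equivRange.symm⟩))
    have hg1a : g1 ⟨a, maS⟩ = g0 ⟨a, maT⟩ := by
      show g0 (Substructure.inclusion hle ⟨a, maS⟩) = g0 ⟨a, maT⟩
      congr 1
    have hg1b : g1 ⟨b, mbS⟩ = g0 ⟨b, mbT⟩ := by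
      show g0 (Substructure.inclusion hle ⟨b, mbS⟩) = g0 ⟨b, mbT⟩
      congr 1
    have hg2a : g2 ⟨a, maS⟩ = g0 ⟨b, mbT⟩ := by
      show g0 (e2 ⟨a, maS⟩) = g0 ⟨b, mbT⟩
      rw [he2a]
    have hg2b : g2 ⟨b, mbS⟩ = g0 ⟨c, mcT⟩ := by
      show g0 (e2 ⟨b, mbS⟩) = g0 ⟨c, mcT⟩
      rw [he2b]
    rw [hg1a, hg1b, hg2a, hg2b] at heq
    -- the two relevant class values
    have hEac : hfun (g0 ⟨a, maT⟩) = hfun (g0 ⟨c, mcT⟩) := by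
      apply (hfun_iff _ _).2
      have s1 : @E1lt M₀ instM a c := hac
      have s2 : E1lt (⟨a, maT⟩ : ↥Sabc) (⟨c, mcT⟩ : ↥Sabc) :=
        (E1lt_map Sabc.subtype ⟨a, maT⟩ ⟨c, mcT⟩).1 s1
      have s3 : E1lt (g0 ⟨a, maT⟩) (g0 ⟨c, mcT⟩) := (E1lt_map g0 _ _).2 s2
      exact (E1lt_map e _ _).2 s3
    have hNeq : hfun (g0 ⟨a, maT⟩) ≠ hfun (g0 ⟨b, mbT⟩) := by
      intro h
      have s4 : E1lt (e (g0 ⟨a, maT⟩)) (e (g0 ⟨b, mbT⟩)) := (hfun_iff _ _).1 h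
      have s3 : E1lt (g0 ⟨a, maT⟩) (g0 ⟨b, mbT⟩) := (E1lt_map e _ _).1 s4
      have s2 : E1lt (⟨a, maT⟩ : ↥Sabc) (⟨b, mbT⟩ : ↥Sabc) := (E1lt_map g0 _ _).1 s3
      have s1 : @E1lt M₀ instM a b := (E1lt_map Sabc.subtype ⟨a, maT⟩ ⟨b, mbT⟩).2 s2
      exact hnab s1
    rcases lt_trichotomy (hfun (g0 ⟨a, maT⟩)) (hfun (g0 ⟨b, mbT⟩)) with hlt | heq2 | hgt
    · have hcond : ¬ hfun (g0 ⟨b, mbT⟩) < hfun (g0 ⟨c, mcT⟩) := by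
        rw [← hEac]; omega
      rw [if_pos hlt, if_neg hcond] at heq
      exact absurd heq (by decide)
    · exact hNeq heq2
    · have h1' : ¬ hfun (g0 ⟨a, maT⟩) < hfun (g0 ⟨b, mbT⟩) := by omega
      have h2' : hfun (g0 ⟨b, mbT⟩) < hfun (g0 ⟨c, mcT⟩) := by
        rw [← hEac]; omega
      rw [if_neg h1', if_pos h2'] at heq
      exact absurd heq (by decide)
  refine ⟨main, ?_⟩
  intro a b c hab hbc hac
  have h1 : ERel M₀ 1 one_pos (fun _ => a) (fun _ => b) := by
    by_contra h
    exact main ⟨a, b, c, hab, hbc, hac, h⟩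
  exact ⟨h1, E1trans b a c (E1symm a b h1) hac⟩
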